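/- The dual function d(λ) = β ∑_z ρ(z) log Q(z,λ) + λ C + (β/2) λ² is differentiable on ℝ, and for every λ ∈ ℝ its derivative equals d′(λ) = −∑_z ρ(z) ∑_{a∈{0,1}} π_λ(a|z) w2(z) c(z,a) + C + β λ. -/

import Mathlib

open Finset

/-- `q_λ(z,a) = w1(z) r(z,a) − λ w2(z) c(z,a)`. -/
noncomputable def qfun {Z : Type*} (r c : Z → Bool → ℝ) (w1 w2 : Z → ℝ)
    (lam : ℝ) (z : Z) (a : Bool) : ℝ :=
  w1 z * r z a - lam * (w2 z * c z a)

/-- Partition function `Q(z,λ) = ∑_a exp(q_λ(z,a)/β)`. -/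
noncomputable def Qpart {Z : Type*} (r c : Z → Bool → ℝ) (w1 w2 : Z → ℝ)
    (β lam : ℝ) (z : Z) : ℝ :=
  ∑ a, Real.exp (qfun r c w1 w2 lam z a / β)

/-- Gibbs policy `π_λ(a|z) = exp(q_λ(z,a)/β) / Q(z,λ)`. -/
noncomputable def gibbs {Z : Type*} (r c : Z → Bool → ℝ) (w1 w2 : Z → ℝ)
    (β lam : ℝ) (z : Z) (a : Bool) : ℝ :=
  Real.exp (qfun r c w1 w2 lam z a / β) / Qpart r c w1 w2 β lam z

/-- The dual function `d(λ) = β ∑_z ρ(z) log Q(z,λ) + λ C + (β/2) λ²`. -/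
noncomputable def dualFun {Z : Type*} [Fintype Z] (ρ : Z → ℝ)
    (r c : Z → Bool → ℝ) (w1 w2 : Z → ℝ) (β C lam : ℝ) : ℝ :=
  β * ∑ z, ρ z * Real.log (Qpart r c w1 w2 β lam z) + lam * C + β * lam ^ 2 / 2

/-- the dual function `d` is differentiable on `ℝ`, with
`d′(λ) = −∑_z ρ(z) ∑_a π_λ(a|z) w2(z) c(z,a) + C + β λ`. -/
theorem dual_hasDerivAt {Z : Type*} [Fintype Z] [Nonempty Z]
    (ρ : Z → ℝ) (hρ_pos : ∀ z, 0 < ρ z) (hρ_sum : ∑ z, ρ z = 1)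
    (r c : Z → Bool → ℝ) (w1 w2 : Z → ℝ)
    (hw1 : ∀ z, 0 ≤ w1 z) (hw2 : ∀ z, 0 ≤ w2 z)
    (β : ℝ) (hβ : 0 < β) (C : ℝ) :
    ∀ lam : ℝ,
      HasDerivAt (fun l => dualFun ρ r c w1 w2 β C l)
        (-(∑ z, ρ z * ∑ a, gibbs r c w1 w2 β lam z a * (w2 z * c z a)) + C + β * lam)
        lam := by

  intro lam
  have hQpos : ∀ z, 0 < Qpart r c w1 w2 β lam z := fun z =>
    Finset.sum_pos (fun a _ => Real.exp_pos _) ⟨false, Finset.mem_univ _⟩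
  have hz : ∀ z, HasDerivAt (fun l => Real.log (Qpart r c w1 w2 β l z))
      ((∑ a, Real.exp (qfun r c w1 w2 lam z a / β) * (-(w2 z * c z a) / β)) /
        Qpart r c w1 w2 β lam z) lam := by
    intro z
    have hQ : HasDerivAt (fun l => Qpart r c w1 w2 β l z)
        (∑ a, Real.exp (qfun r c w1 w2 lam z a / β) * (-(w2 z * c z a) / β)) lam := by
      unfold Qpart qfun
      apply HasDerivAt.fun_sum
      intro a _
      have h1 : HasDerivAt (fun l : ℝ => (w1 z * r z a - l * (w2 z * c z a)) / β)
          (-(w2 z * c z a) / β) lam := by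
        have h := ((hasDerivAt_const lam (w1 z * r z a)).sub
          (hasDerivAt_mul_const (w2 z * c z a))).div_const β
        simpa [neg_div] using h
      exact h1.exp
    exact hQ.log (ne_of_gt (hQpos z))
  have hmain : HasDerivAt (fun l => dualFun ρ r c w1 w2 β C l)
      (β * ∑ z, ρ z * ((∑ a, Real.exp (qfun r c w1 w2 lam z a / β) * (-(w2 z * c z a) / β)) /
        Qpart r c w1 w2 β lam z) + C + β * lam) lam := by
    unfold dualFun
    have hsum : HasDerivAt (fun l => ∑ z, ρ z * Real.log (Qpart r c w1 w2 β l z))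
        (∑ z, ρ z * ((∑ a, Real.exp (qfun r c w1 w2 lam z a / β) * (-(w2 z * c z a) / β)) /
          Qpart r c w1 w2 β lam z)) lam :=
      HasDerivAt.fun_sum fun z _ => (hz z).const_mul (ρ z)
    have hlin : HasDerivAt (fun l : ℝ => l * C) C lam := hasDerivAt_mul_const C
    have hsq : HasDerivAt (fun l : ℝ => β * l ^ 2 / 2) (β * lam) lam := by
      have h := ((hasDerivAt_pow 2 lam).const_mul β).div_const 2
      refine h.congr_deriv ?_
      push_cast
      ring
    exact ((hsum.const_mul β).add hlin).add hsq
  convert hmain using 1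
  have key : β * ∑ z, ρ z * ((∑ a, Real.exp (qfun r c w1 w2 lam z a / β) * (-(w2 z * c z a) / β)) /
        Qpart r c w1 w2 β lam z)
      = -(∑ z, ρ z * ∑ a, gibbs r c w1 w2 β lam z a * (w2 z * c z a)) := by
    rw [Finset.mul_sum, ← Finset.sum_neg_distrib]
    refine Finset.sum_congr rfl fun z _ => ?_
    have hQ := (hQpos z).ne'
    have h1 : (∑ a, gibbs r c w1 w2 β lam z a * (w2 z * c z a))
        = (∑ a, Real.exp (qfun r c w1 w2 lam z a / β) * (w2 z * c z a)) /
          Qpart r c w1 w2 β lam z := by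
      rw [Finset.sum_div]
      refine Finset.sum_congr rfl fun a _ => ?_
      unfold gibbs
      ring
    have h2 : (∑ a, Real.exp (qfun r c w1 w2 lam z a / β) * (-(w2 z * c z a) / β))
        = -(∑ a, Real.exp (qfun r c w1 w2 lam z a / β) * (w2 z * c z a)) / β := by
      rw [neg_div, Finset.sum_div, ← Finset.sum_neg_distrib]
      refine Finset.sum_congr rfl fun a _ => ?_
      ring
    rw [h1, h2]
    field_simp
    congr 2
    exact Finset.sum_congr rfl fun a _ => by ring
  rw [key]
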